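/- Let K be a field of characteristic not 2, V a K-vector space of dimension 3, Q a quadratic form on V, and x an element of the Clifford algebra of Q. Write conj y := reverse (involute y) and suppose x * conj x * reverse (x * conj x) = algebraMap d for some d : K with d ≠ 0. Then x is invertible with two-sided inverse d⁻¹ • (conj x * reverse (x * conj x)); that is, x * (d⁻¹ • (conj x * reverse (x * conj x))) = 1 and (d⁻¹ • (conj x * reverse (x * conj x))) * x = 1. (This is the paper's three-dimensional inverse formula A⁻¹ = ⟦A⟧₁₂⟦A⟦A⟧₁₂⟧₃₄ / Det(A).) -/

import Mathlib

open CliffordAlgebra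

section FinDim

variable {K V : Type*} [Field K] [AddCommGroup V] [Module K V]
  [FiniteDimensional K V] (Q : QuadraticForm K V)

private noncomputable def cbasis : Module.Basis (Fin (Module.finrank K V)) K V :=
  Module.finBasis K V

private noncomputable def cprod (s : Finset (Fin (Module.finrank K V))) :
    CliffordAlgebra Q :=
  ((s.sort (· ≤ ·)).map fun i => ι Q (cbasis (K := K) (V := V) i)).prod

private lemma cprod_empty : cprod Q (∅ : Finset (Fin (Module.finrank K V))) = 1 := by
  simp [cprod]

private lemma cprod_insert {i : Fin (Module.finrank K V)}
    {s : Finset (Fin (Module.finrank K V))} (h : ∀ j ∈ s, i ≤ j) (hi : i ∉ s) :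
    cprod Q (insert i s) = ι Q (cbasis (K := K) (V := V) i) * cprod Q s := by
  unfold cprod
  rw [Finset.sort_insert (r := (· ≤ ·)) h hi, List.map_cons, List.prod_cons]

private lemma cprod_key (i : Fin (Module.finrank K V))
    (s : Finset (Fin (Module.finrank K V))) :
    ι Q (cbasis (K := K) (V := V) i) * cprod Q s ∈
      Submodule.span K (cprod Q '' {t | t ⊆ insert i s}) := by
  suffices H : ∀ (m : ℕ) (s : Finset (Fin (Module.finrank K V)))
      (i : Fin (Module.finrank K V)), s.card ≤ m →
      ι Q (cbasis (K := K) (V := V) i) * cprod Q s ∈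
        Submodule.span K (cprod Q '' {t | t ⊆ insert i s}) from
    H s.card s i le_rfl
  intro m
  induction m with
  | zero =>
    intro s i hcard
    have : s = ∅ := Finset.card_eq_zero.mp (Nat.le_zero.mp hcard)
    subst this
    rw [cprod_empty, mul_one]
    have h1 : cprod Q {i} = ι Q (cbasis (K := K) (V := V) i) := by
      simp [cprod]
    rw [← h1]
    exact Submodule.subset_span ⟨{i}, by simp, rfl⟩
  | succ m IH =>
  intro s i hcard
  rcases s.eq_empty_or_nonempty with rfl | hne
  · rw [cprod_empty, mul_one]
    have h1 : cprod Q {i} = ι Q (cbasis (K := K) (V := V) i) := by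
      simp [cprod]
    rw [← h1]
    exact Submodule.subset_span ⟨{i}, by simp, rfl⟩
  · set j := s.min' hne with hj
    have hjs : j ∈ s := s.min'_mem hne
    have hsplit : cprod Q s =
        ι Q (cbasis (K := K) (V := V) j) * cprod Q (s.erase j) := by
      conv_lhs => rw [← Finset.insert_erase hjs]
      exact cprod_insert Q (fun k hk => s.min'_le k (Finset.mem_of_mem_erase hk))
        (s.notMem_erase j)
    rcases lt_trichotomy i j with hij | hij | hij
    · -- i < j : i is below everything in s
      have his : i ∉ s := fun h => absurd (s.min'_le i h) (not_le.mpr hij)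
      have : cprod Q (insert i s) = ι Q (cbasis (K := K) (V := V) i) * cprod Q s :=
        cprod_insert Q (fun k hk => le_of_lt (lt_of_lt_of_le hij (s.min'_le k hk))) his
      rw [← this]
      exact Submodule.subset_span ⟨insert i s, Set.mem_setOf_eq ▸ subset_rfl, rfl⟩
    · -- i = j : square to a scalar
      subst hij
      rw [hsplit, ← mul_assoc, ι_sq_scalar, ← Algebra.smul_def]
      exact Submodule.smul_mem _ _ (Submodule.subset_span
        ⟨s.erase j, fun k hk => Finset.mem_insert_of_mem (Finset.mem_of_mem_erase hk), rfl⟩)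
    · -- j < i : anticommute
      have hanti : ι Q (cbasis (K := K) (V := V) i) * ι Q (cbasis (K := K) (V := V) j) =
          algebraMap K _ (QuadraticMap.polar Q (cbasis (K := K) (V := V) i)
            (cbasis (K := K) (V := V) j)) -
            ι Q (cbasis (K := K) (V := V) j) * ι Q (cbasis (K := K) (V := V) i) :=
        eq_sub_of_add_eq (ι_mul_ι_add_swap _ _)
      have hexp : ι Q (cbasis (K := K) (V := V) i) * cprod Q s =
          QuadraticMap.polar Q (cbasis (K := K) (V := V) i) (cbasis (K := K) (V := V) j) •
            cprod Q (s.erase j) -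
          ι Q (cbasis (K := K) (V := V) j) *
            (ι Q (cbasis (K := K) (V := V) i) * cprod Q (s.erase j)) := by
        rw [hsplit, ← mul_assoc, hanti, sub_mul, Algebra.smul_def, mul_assoc]
      rw [hexp]
      have hcard' : (s.erase j).card ≤ m := by
        have := Finset.card_erase_lt_of_mem hjs
        omega
      have hIH := IH (s.erase j) i hcard'
      refine Submodule.sub_mem _ ?_ ?_
      · exact Submodule.smul_mem _ _ (Submodule.subset_span
          ⟨s.erase j, fun k hk => Finset.mem_insert_of_mem (Finset.mem_of_mem_erase hk), rfl⟩)
      · -- multiply the IH membership by ι (cbasis j) on the left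
        refine Submodule.span_induction
          (fun z hz => ?_) (by simp) (fun z w _ _ hz hw => by rw [mul_add]; exact add_mem hz hw)
          (fun c z _ hz => by rw [mul_smul_comm]; exact Submodule.smul_mem _ _ hz) hIH
        obtain ⟨t, ht, rfl⟩ := hz
        have hjt : j ∉ t := by
          intro hmem
          rcases Finset.mem_insert.mp (ht hmem) with h | h
          · exact absurd h (ne_of_lt hij)
          · exact (s.notMem_erase j) h
        have hle : ∀ k ∈ t, j ≤ k := by
          intro k hk
          rcases Finset.mem_insert.mp (ht hk) with h | h
          · exact le_of_lt (h ▸ hij)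
          · exact s.min'_le k (Finset.mem_of_mem_erase h)
        rw [← cprod_insert Q hle hjt]
        refine Submodule.subset_span ⟨insert j t, ?_, rfl⟩
        intro k hk
        rcases Finset.mem_insert.mp hk with rfl | hk
        · exact Finset.mem_insert_of_mem hjs
        · rcases Finset.mem_insert.mp (ht hk) with rfl | hk
          · exact Finset.mem_insert_self _ _
          · exact Finset.mem_insert_of_mem (Finset.mem_of_mem_erase hk)

private lemma cprod_span_top :
    Submodule.span K (Set.range (cprod Q)) = ⊤ := by
  set S := Submodule.span K (Set.range (cprod Q)) with hS
  have hmono : ∀ i s, (cprod Q '' {t | t ⊆ insert i s}) ⊆ Set.range (cprod Q) := by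
    rintro i s _ ⟨t, _, rfl⟩; exact ⟨t, rfl⟩
  have hgen : ∀ i s, ι Q (cbasis (K := K) (V := V) i) * cprod Q s ∈ S :=
    fun i s => Submodule.span_mono (hmono i s) (cprod_key Q i s)
  have hbasis : ∀ i, ∀ y ∈ S, ι Q (cbasis (K := K) (V := V) i) * y ∈ S := by
    intro i y hy
    refine Submodule.span_induction (fun z hz => ?_) (by simp)
      (fun z w _ _ hz hw => by rw [mul_add]; exact add_mem hz hw)
      (fun c z _ hz => by rw [mul_smul_comm]; exact Submodule.smul_mem _ _ hz) hy
    obtain ⟨t, rfl⟩ := hz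
    exact hgen i t
  have hvec : ∀ (v : V), ∀ y ∈ S, ι Q v * y ∈ S := by
    intro v y hy
    have hv : v = ∑ i, (cbasis (K := K) (V := V)).repr v i • cbasis (K := K) (V := V) i :=
      ((cbasis (K := K) (V := V)).sum_repr v).symm
    rw [hv, map_sum, Finset.sum_mul]
    refine Submodule.sum_mem _ fun i _ => ?_
    rw [map_smul, smul_mul_assoc]
    exact Submodule.smul_mem _ _ (hbasis i y hy)
  have hone : (1 : CliffordAlgebra Q) ∈ S := by
    rw [← cprod_empty Q]
    exact Submodule.subset_span ⟨∅, rfl⟩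
  have hmul : ∀ x : CliffordAlgebra Q, ∀ y ∈ S, x * y ∈ S := by
    intro x
    induction x using CliffordAlgebra.induction with
    | algebraMap r => intro y hy; rw [← Algebra.smul_def]; exact Submodule.smul_mem _ _ hy
    | ι v => exact hvec v
    | mul a b ha hb => intro y hy; rw [mul_assoc]; exact ha _ (hb y hy)
    | add a b ha hb => intro y hy; rw [add_mul]; exact add_mem (ha y hy) (hb y hy)
  rw [eq_top_iff]
  intro x _
  simpa using hmul x 1 hone

private lemma cliffordFinite : Module.Finite K (CliffordAlgebra Q) := by
  refine ⟨?_⟩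
  rw [← cprod_span_top Q]
  exact Submodule.fg_span (Set.finite_range _)

end FinDim

private lemma right_inv_to_left {K A : Type*} [Field K] [Ring A] [Algebra K A]
    [Module.Finite K A] {a u : A} (h : a * u = 1) : u * a = 1 := by
  have hsurj : Function.Surjective (LinearMap.mulLeft K a) := fun z =>
    ⟨u * z, by rw [LinearMap.mulLeft_apply, ← mul_assoc, h, one_mul]⟩
  have hinj : Function.Injective (LinearMap.mulLeft K a) :=
    LinearMap.injective_iff_surjective.mpr hsurj
  apply hinj
  rw [LinearMap.mulLeft_apply, LinearMap.mulLeft_apply, ← mul_assoc, h, one_mul, mul_one]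

/-- In dimension 3 (char K ≠ 2), if `x * conj x * reverse (x * conj x)` is a
nonzero scalar `d` (with `conj y = reverse (involute y)`), then
`d⁻¹ • (conj x * reverse (x * conj x))` is a two-sided inverse of `x`:
the paper's three-dimensional inverse formula
`A⁻¹ = ⟦A⟧₁₂ ⟦A ⟦A⟧₁₂⟧₃₄ / Det(A)`. -/
theorem inv_dim_three (K V : Type*) [Field K] [AddCommGroup V] [Module K V]
    [FiniteDimensional K V] (h2 : (2 : K) ≠ 0)
    (hdim : Module.finrank K V = 3)
    (Q : QuadraticForm K V) (x : CliffordAlgebra Q) (d : K) (hd : d ≠ 0)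
    (hdet : x * reverse (involute x) * reverse (x * reverse (involute x)) =
      algebraMap K (CliffordAlgebra Q) d) :
    x * (d⁻¹ • (reverse (involute x) * reverse (x * reverse (involute x)))) = 1 ∧
      (d⁻¹ • (reverse (involute x) * reverse (x * reverse (involute x)))) * x = 1 := by
  haveI : Module.Finite K (CliffordAlgebra Q) := cliffordFinite (K := K) Q
  have hright :
      x * (d⁻¹ • (reverse (involute x) * reverse (x * reverse (involute x)))) = 1 := by
    rw [mul_smul_comm, ← mul_assoc, hdet, Algebra.algebraMap_eq_smul_one, smul_smul,
      inv_mul_cancel₀ hd, one_smul]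
  exact ⟨hright, right_inv_to_left (K := K) hright⟩
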